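/- Let C be a type, comp a composition rule satisfying (C2) and (C3) with neutral element e, d a decomposition rule satisfying (D2) and (D3) with the same element e as void object, assume (CD1), and assume condition (D5): for every Γ : C there is N such that for all n ≥ N every list in decs n Γ contains e. Let K be a commutative ring. Then there exists a K-linear map S : (C →₀ K) →ₗ[K] (C →₀ K) such that for every Γ : C, ((d Γ).map (fun p => mul (S (Finsupp.single p.1 1)) (Finsupp.single p.2 1))).sum = (if Γ = e then Finsupp.single e 1 else 0) and ((d Γ).map (fun p => mul (Finsupp.single p.1 1) (S (Finsupp.single p.2 1)))).sum = (if Γ = e then Finsupp.single e 1 else 0); i.e., S is an antipode making C →₀ K a Hopf algebra. (Proposition 3, Hopf Algebra.) -/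

import Mathlib

/-- The induced multiplication on the free module `C →₀ K`. -/
noncomputable def mulF {C : Type*} (K : Type*) [CommRing K]
    (comp : C → C → Multiset C) : (C →₀ K) →ₗ[K] (C →₀ K) →ₗ[K] (C →₀ K) :=
  Finsupp.lift ((C →₀ K) →ₗ[K] (C →₀ K)) K C fun Γ₂ =>
    Finsupp.lift (C →₀ K) K C fun Γ₁ =>
      ((comp Γ₂ Γ₁).map fun Γ => Finsupp.single Γ (1 : K)).sum

/-- The multiset of decompositions of `Γ` into `n` ordered parts:
`decs 1 Γ = {[Γ]}` and
`decs (n+1) Γ = (d Γ).bind (fun p => (decs n p.1).map (fun l => l ++ [p.2]))`. -/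
def decs {C : Type*} (d : C → Multiset (C × C)) : ℕ → C → Multiset (List C)
  | 0, Γ => {[Γ]}
  | 1, Γ => {[Γ]}
  | n + 2, Γ => (d Γ).bind fun p => (decs d (n + 1) p.1).map fun l => l ++ [p.2]

section Aux
variable {C : Type*} (K : Type*) [CommRing K] [DecidableEq C]
variable (comp : C → C → Multiset C) (d : C → Multiset (C × C)) (e : C)

lemma mulF_single (a b : C) :
    mulF K comp (Finsupp.single a 1) (Finsupp.single b 1)
      = ((comp a b).map fun Γ => Finsupp.single Γ (1 : K)).sum := by
  simp [mulF, Finsupp.lift_apply, Finsupp.sum_single_index]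

lemma mulF_sum_left (s : Multiset (C →₀ K)) (z : C →₀ K) :
    mulF K comp s.sum z = (s.map fun x => mulF K comp x z).sum := by
  induction s using Multiset.induction with
  | empty => simp
  | cons a s ih => simp [map_add, LinearMap.add_apply, ih]

lemma mulF_sum_right (x : C →₀ K) (s : Multiset (C →₀ K)) :
    mulF K comp x s.sum = (s.map fun z => mulF K comp x z).sum :=
  map_multiset_sum (mulF K comp x) s

set_option linter.unusedSectionVars false

lemma mulF_e_left (hC3l : ∀ Γ : C, comp e Γ = {Γ}) (x : C →₀ K) :
    mulF K comp (Finsupp.single e 1) x = x := by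
  induction x using Finsupp.induction_linear with
  | zero => simp
  | add f g hf hg => simp [map_add, hf, hg]
  | single a k =>
    have ha : (Finsupp.single a k : C →₀ K) = k • Finsupp.single a 1 := by
      simp [Finsupp.smul_single]
    rw [ha, map_smul, mulF_single, hC3l]
    simp

lemma mulF_e_right (hC3r : ∀ Γ : C, comp Γ e = {Γ}) (x : C →₀ K) :
    mulF K comp x (Finsupp.single e 1) = x := by
  induction x using Finsupp.induction_linear with
  | zero => simp
  | add f g hf hg => simp [map_add, LinearMap.add_apply, hf, hg]
  | single a k =>
    have ha : (Finsupp.single a k : C →₀ K) = k • Finsupp.single a 1 := by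
      simp [Finsupp.smul_single]
    rw [ha, map_smul, LinearMap.smul_apply, mulF_single, hC3r]
    simp

lemma mulF_assoc
    (hC2 : ∀ Γ₃ Γ₂ Γ₁ : C,
      (comp Γ₂ Γ₁).bind (fun x => comp Γ₃ x) = (comp Γ₃ Γ₂).bind (fun x => comp x Γ₁))
    (x y z : C →₀ K) :
    mulF K comp (mulF K comp x y) z = mulF K comp x (mulF K comp y z) := by
  have base : ∀ a b c : C,
      mulF K comp (mulF K comp (Finsupp.single a 1) (Finsupp.single b 1)) (Finsupp.single c 1)
        = mulF K comp (Finsupp.single a 1)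
            (mulF K comp (Finsupp.single b 1) (Finsupp.single c 1)) := by
    intro a b c
    rw [mulF_single, mulF_single, mulF_sum_left, mulF_sum_right,
      Multiset.map_map, Multiset.map_map]
    have l1 : ((comp a b).map fun x =>
        mulF K comp (Finsupp.single x (1:K)) (Finsupp.single c 1)).sum
        = (((comp a b).bind fun x => comp x c).map fun Γ => Finsupp.single Γ (1:K)).sum := by
      rw [Multiset.map_bind, Multiset.sum_bind]
      exact congrArg _ (Multiset.map_congr rfl fun x _ => (mulF_single K comp x c).symm) |>.symm
    have l2 : ((comp b c).map fun x =>
        mulF K comp (Finsupp.single a (1:K)) (Finsupp.single x 1)).sum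
        = (((comp b c).bind fun x => comp a x).map fun Γ => Finsupp.single Γ (1:K)).sum := by
      rw [Multiset.map_bind, Multiset.sum_bind]
      exact congrArg _ (Multiset.map_congr rfl fun x _ => (mulF_single K comp a x).symm) |>.symm
    simp only [Function.comp]
    rw [l1, l2, hC2 a b c]
  induction x using Finsupp.induction_linear with
  | zero => simp
  | add f g hf hg => simp [map_add, LinearMap.add_apply, hf, hg]
  | single a j =>
    induction y using Finsupp.induction_linear with
    | zero => simp
    | add f g hf hg => simp [map_add, LinearMap.add_apply, hf, hg]
    | single b k =>
      induction z using Finsupp.induction_linear with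
      | zero => simp
      | add f g hf hg => simp [map_add, LinearMap.add_apply, hf, hg]
      | single c m =>
        have h1 : (Finsupp.single a j : C →₀ K) = j • Finsupp.single a 1 := by simp
        have h2 : (Finsupp.single b k : C →₀ K) = k • Finsupp.single b 1 := by simp
        have h3 : (Finsupp.single c m : C →₀ K) = m • Finsupp.single c 1 := by simp
        rw [h1, h2, h3]
        simp only [map_smul, LinearMap.smul_apply, map_smul]
        rw [base a b c]

/-- counit-unit composite -/
noncomputable def EF : C → (C →₀ K) := fun Γ => if Γ = e then Finsupp.single e 1 else 0

/-- convolution -/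
noncomputable def conv (f g : C → (C →₀ K)) : C → (C →₀ K) := fun Γ =>
  ((d Γ).map fun p => mulF K comp (f p.1) (g p.2)).sum

lemma d_struct
    (hD3b : ∀ Γ : C, Γ ≠ e → (d Γ).count (e, Γ) = 1)
    (hD3c : ∀ Γ : C, Γ ≠ e → (d Γ).count (Γ, e) = 1)
    (hD3d : ∀ Γ : C, Γ ≠ e → ∀ p ∈ d Γ,
      (p.1 = e → p = (e, Γ)) ∧ (p.2 = e → p = (Γ, e)))
    (Γ : C) (hne : Γ ≠ e) :
    d Γ = (e, Γ) ::ₘ (Γ, e) ::ₘ ((d Γ).filter fun p => p.1 ≠ e ∧ p.2 ≠ e) := by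
  ext q
  rw [Multiset.count_cons, Multiset.count_cons, Multiset.count_filter]
  by_cases h1 : q = (e, Γ)
  · subst h1
    have : ((e, Γ) : C × C) ≠ (Γ, e) := by
      intro h; exact hne (Prod.ext_iff.mp h).1.symm
    simp [hD3b Γ hne, this, hne]
  · by_cases h2 : q = (Γ, e)
    · subst h2
      simp [hD3c Γ hne, h1, hne]
    · by_cases hP : q.1 ≠ e ∧ q.2 ≠ e
      · simp [h1, h2, hP]
      · have hq : (q ∈ d Γ) → False := by
          intro hq
          rcases not_and_or.mp hP with h | h
          · exact h1 ((hD3d Γ hne q hq).1 (not_ne_iff.mp h))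
          · exact h2 ((hD3d Γ hne q hq).2 (not_ne_iff.mp h))
        have : Multiset.count q (d Γ) = 0 := by
          rw [Multiset.count_eq_zero]; exact hq
        simp [h1, h2, hP, this]

lemma conv_E_left
    (hC3l : ∀ Γ : C, comp e Γ = {Γ})
    (hD3a : d e = {(e, e)})
    (hD3b : ∀ Γ : C, Γ ≠ e → (d Γ).count (e, Γ) = 1)
    (hD3c : ∀ Γ : C, Γ ≠ e → (d Γ).count (Γ, e) = 1)
    (hD3d : ∀ Γ : C, Γ ≠ e → ∀ p ∈ d Γ,
      (p.1 = e → p = (e, Γ)) ∧ (p.2 = e → p = (Γ, e)))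
    (f : C → (C →₀ K)) : conv K comp d (EF K e) f = f := by
  funext Γ
  by_cases hne : Γ = e
  · rw [conv, hne, hD3a]
    simp only [Multiset.map_singleton, Multiset.sum_singleton]
    rw [show EF K e e = Finsupp.single e 1 by simp [EF]]
    exact mulF_e_left K comp e hC3l (f e)
  · rw [conv, d_struct d e hD3b hD3c hD3d Γ hne]
    simp only [Multiset.map_cons, Multiset.sum_cons]
    have hEe : EF (C := C) K e e = Finsupp.single e 1 := by simp [EF]
    have hEΓ : EF K e Γ = 0 := by simp [EF, hne]
    rw [hEe, hEΓ, mulF_e_left K comp e hC3l (f Γ)]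
    have hz : ((Multiset.filter (fun p => p.1 ≠ e ∧ p.2 ≠ e) (d Γ)).map
        fun p => mulF K comp (EF K e p.1) (f p.2)).sum = 0 := by
      apply Multiset.sum_eq_zero
      intro x hx
      rcases Multiset.mem_map.mp hx with ⟨p, hp, rfl⟩
      have := (Multiset.mem_filter.mp hp).2
      rw [show EF K e p.1 = 0 by simp [EF, this.1]]
      simp
    rw [hz]
    simp

lemma conv_E_right
    (hC3r : ∀ Γ : C, comp Γ e = {Γ})
    (hD3a : d e = {(e, e)})
    (hD3b : ∀ Γ : C, Γ ≠ e → (d Γ).count (e, Γ) = 1)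
    (hD3c : ∀ Γ : C, Γ ≠ e → (d Γ).count (Γ, e) = 1)
    (hD3d : ∀ Γ : C, Γ ≠ e → ∀ p ∈ d Γ,
      (p.1 = e → p = (e, Γ)) ∧ (p.2 = e → p = (Γ, e)))
    (f : C → (C →₀ K)) : conv K comp d f (EF K e) = f := by
  funext Γ
  by_cases hne : Γ = e
  · rw [conv, hne, hD3a]
    simp only [Multiset.map_singleton, Multiset.sum_singleton]
    rw [show EF K e e = Finsupp.single e 1 by simp [EF]]
    exact mulF_e_right K comp e hC3r (f e)
  · rw [conv, d_struct d e hD3b hD3c hD3d Γ hne]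
    simp only [Multiset.map_cons, Multiset.sum_cons]
    have hEe : EF (C := C) K e e = Finsupp.single e 1 := by simp [EF]
    have hEΓ : EF K e Γ = 0 := by simp [EF, hne]
    rw [hEe, hEΓ, mulF_e_right K comp e hC3r (f Γ)]
    have hz : ((Multiset.filter (fun p => p.1 ≠ e ∧ p.2 ≠ e) (d Γ)).map
        fun p => mulF K comp (f p.1) (EF K e p.2)).sum = 0 := by
      apply Multiset.sum_eq_zero
      intro x hx
      rcases Multiset.mem_map.mp hx with ⟨p, hp, rfl⟩
      have := (Multiset.mem_filter.mp hp).2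
      rw [show EF K e p.2 = 0 by simp [EF, this.2]]
      simp
    rw [hz]
    simp

lemma conv_assoc
    (hC2 : ∀ Γ₃ Γ₂ Γ₁ : C,
      (comp Γ₂ Γ₁).bind (fun x => comp Γ₃ x) = (comp Γ₃ Γ₂).bind (fun x => comp x Γ₁))
    (hD2 : ∀ Γ : C,
      (d Γ).bind (fun p => (d p.2).map (fun q => (p.1, q.1, q.2))) =
      (d Γ).bind (fun p => (d p.1).map (fun q => (q.1, q.2, p.2))))
    (f g h : C → (C →₀ K)) :
    conv K comp d (conv K comp d f g) h = conv K comp d f (conv K comp d g h) := by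
  funext Γ
  have L : conv K comp d (conv K comp d f g) h Γ
      = (((d Γ).bind fun p => (d p.1).map fun q => (q.1, q.2, p.2)).map
          fun t => mulF K comp (f t.1) (mulF K comp (g t.2.1) (h t.2.2))).sum := by
    rw [Multiset.map_bind, Multiset.sum_bind, conv]
    apply congrArg
    apply Multiset.map_congr rfl
    intro p _
    rw [conv, mulF_sum_left, Multiset.map_map, Multiset.map_map]
    apply congrArg
    apply Multiset.map_congr rfl
    intro q _
    exact mulF_assoc K comp hC2 (f q.1) (g q.2) (h p.2)
  have R : conv K comp d f (conv K comp d g h) Γ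
      = (((d Γ).bind fun p => (d p.2).map fun q => (p.1, q.1, q.2)).map
          fun t => mulF K comp (f t.1) (mulF K comp (g t.2.1) (h t.2.2))).sum := by
    rw [Multiset.map_bind, Multiset.sum_bind, conv]
    apply congrArg
    apply Multiset.map_congr rfl
    intro p _
    rw [conv, mulF_sum_right, Multiset.map_map, Multiset.map_map]
    exact congrArg _ (Multiset.map_congr rfl fun q _ => rfl)
  rw [L, R, hD2 Γ]

def rel (a Γ : C) : Prop := ∃ b, (a, b) ∈ d Γ ∧ a ≠ e ∧ b ≠ e

lemma acc_of_decs (hD3a : d e = {(e, e)}) :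
    ∀ n Γ, (∀ m, n ≤ m → ∀ l ∈ decs d (m + 1) Γ, e ∈ l) → Acc (rel d e) Γ := by
  intro n
  induction n with
  | zero =>
    intro Γ h
    have h1 := h 0 le_rfl [Γ] (by simp [decs])
    have hΓ : Γ = e := by
      have := List.mem_singleton.mp h1; exact this.symm
    constructor
    rintro a ⟨b, hmem, ha, hb⟩
    rw [hΓ, hD3a] at hmem
    have := Multiset.mem_singleton.mp hmem
    exact absurd (congrArg Prod.snd this) hb
  | succ n ih =>
    intro Γ h
    constructor
    rintro a ⟨b, hmem, ha, hb⟩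
    apply ih
    intro m hm l hl
    have hstep : l ++ [b] ∈ decs d (m + 2) Γ := by
      rw [show decs d (m + 2) Γ
          = (d Γ).bind fun p => (decs d (m + 1) p.1).map (fun l => l ++ [p.2]) from rfl]
      exact Multiset.mem_bind.mpr ⟨(a, b), hmem, Multiset.mem_map.mpr ⟨l, hl, rfl⟩⟩
    have he := h (m + 1) (by omega) (l ++ [b]) hstep
    rcases List.mem_append.mp he with h' | h'
    · exact h'
    · exact absurd (List.mem_singleton.mp h').symm hb

lemma rel_wf (hD3a : d e = {(e, e)})
    (hD5 : ∀ Γ : C, ∃ N : ℕ, ∀ n ≥ N, ∀ l ∈ decs d n Γ, e ∈ l) :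
    WellFounded (rel d e) := by
  constructor
  intro Γ
  obtain ⟨N, hN⟩ := hD5 Γ
  exact acc_of_decs d e hD3a N Γ fun m hm l hl => hN (m + 1) (by omega) l hl

noncomputable def Linv (hwf : WellFounded (rel d e)) (f : C → (C →₀ K)) : C → (C →₀ K) :=
  hwf.fix fun Γ rec =>
    if Γ = e then Finsupp.single e 1
    else - f Γ - (((d Γ).filter fun p => p.1 ≠ e ∧ p.2 ≠ e).attach.map fun p =>
      mulF K comp (rec p.1.1 (by
        obtain ⟨hm, h1, h2⟩ : p.1 ∈ d Γ ∧ p.1.1 ≠ e ∧ p.1.2 ≠ e := by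
          simpa using Multiset.mem_filter.mp p.2
        exact ⟨p.1.2, hm, h1, h2⟩)) (f p.1.2)).sum

lemma Linv_eq (hwf : WellFounded (rel d e)) (f : C → (C →₀ K)) (Γ : C) :
    Linv K comp d e hwf f Γ =
      if Γ = e then Finsupp.single e 1
      else - f Γ - (((d Γ).filter fun p => p.1 ≠ e ∧ p.2 ≠ e).map fun p =>
        mulF K comp (Linv K comp d e hwf f p.1) (f p.2)).sum := by
  rw [Linv, WellFounded.fix_eq]
  by_cases h : Γ = e
  · simp [h]
  · simp only [h, if_false]
    congr 1
    apply congrArg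
    conv_rhs => rw [← Multiset.attach_map_val ((d Γ).filter fun p => p.1 ≠ e ∧ p.2 ≠ e)]
    rw [Multiset.map_map]
    rfl

lemma Linv_conv
    (hC3l : ∀ Γ : C, comp e Γ = {Γ})
    (hC3r : ∀ Γ : C, comp Γ e = {Γ})
    (hD3a : d e = {(e, e)})
    (hD3b : ∀ Γ : C, Γ ≠ e → (d Γ).count (e, Γ) = 1)
    (hD3c : ∀ Γ : C, Γ ≠ e → (d Γ).count (Γ, e) = 1)
    (hD3d : ∀ Γ : C, Γ ≠ e → ∀ p ∈ d Γ,
      (p.1 = e → p = (e, Γ)) ∧ (p.2 = e → p = (Γ, e)))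
    (hwf : WellFounded (rel d e)) (f : C → (C →₀ K))
    (hf : f e = Finsupp.single e 1) :
    conv K comp d (Linv K comp d e hwf f) f = EF K e := by
  have hLe : Linv K comp d e hwf f e = Finsupp.single e 1 := by
    rw [Linv_eq]; simp
  funext Γ
  by_cases hne : Γ = e
  · rw [conv, hne, hD3a]
    simp only [Multiset.map_singleton, Multiset.sum_singleton]
    rw [hLe, hf, mulF_e_left K comp e hC3l]
    simp [EF]
  · rw [conv, d_struct d e hD3b hD3c hD3d Γ hne]
    simp only [Multiset.map_cons, Multiset.sum_cons]
    rw [hLe, hf, mulF_e_left K comp e hC3l, mulF_e_right K comp e hC3r]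
    rw [Linv_eq K comp d e hwf f Γ, if_neg hne]
    have hEΓ : EF K e Γ = 0 := by simp [EF, hne]
    rw [hEΓ]
    abel

end Aux

/-- Proposition 3 (Hopf Algebra): under (C2), (C3), (D2), (D3), (CD1) and (D5)
there exists an antipode `S` on `C →₀ K`. -/
theorem stmt8 {C : Type*} (K : Type*) [CommRing K] [DecidableEq C]
    (comp : C → C → Multiset C)
    (hC2 : ∀ Γ₃ Γ₂ Γ₁ : C,
      (comp Γ₂ Γ₁).bind (fun x => comp Γ₃ x) = (comp Γ₃ Γ₂).bind (fun x => comp x Γ₁))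
    (e : C)
    (hC3l : ∀ Γ : C, comp e Γ = {Γ})
    (hC3r : ∀ Γ : C, comp Γ e = {Γ})
    (d : C → Multiset (C × C))
    (hD2 : ∀ Γ : C,
      (d Γ).bind (fun p => (d p.2).map (fun q => (p.1, q.1, q.2))) =
      (d Γ).bind (fun p => (d p.1).map (fun q => (q.1, q.2, p.2))))
    (hD3a : d e = {(e, e)})
    (hD3b : ∀ Γ : C, Γ ≠ e → (d Γ).count (e, Γ) = 1)
    (hD3c : ∀ Γ : C, Γ ≠ e → (d Γ).count (Γ, e) = 1)
    (hD3d : ∀ Γ : C, Γ ≠ e → ∀ p ∈ d Γ,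
      (p.1 = e → p = (e, Γ)) ∧ (p.2 = e → p = (Γ, e)))
    (hCD1 : ∀ Γ₂ Γ₁ : C,
      (comp Γ₂ Γ₁).bind d =
        (d Γ₂).bind (fun p₂ => (d Γ₁).bind (fun p₁ =>
          (comp p₂.1 p₁.1).bind (fun a =>
            (comp p₂.2 p₁.2).map (fun b => (a, b))))))
    (hD5 : ∀ Γ : C, ∃ N : ℕ, ∀ n ≥ N, ∀ l ∈ decs d n Γ, e ∈ l) :
    ∃ S : (C →₀ K) →ₗ[K] (C →₀ K),
      ∀ Γ : C,
        ((d Γ).map fun p =>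
            mulF K comp (S (Finsupp.single p.1 1)) (Finsupp.single p.2 1)).sum =
          (if Γ = e then Finsupp.single e (1 : K) else 0) ∧
        ((d Γ).map fun p =>
            mulF K comp (Finsupp.single p.1 1) (S (Finsupp.single p.2 1))).sum =
          (if Γ = e then Finsupp.single e (1 : K) else 0) := by
  have hwf : WellFounded (rel d e) := rel_wf d e hD3a (fun Γ => by
    obtain ⟨N, hN⟩ := hD5 Γ
    exact ⟨N, fun n hn l hl => hN n hn l hl⟩)
  set ι : C → (C →₀ K) := fun Γ => Finsupp.single Γ 1 with hι
  set S0 : C → (C →₀ K) := Linv K comp d e hwf ι with hS0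
  have hSι : conv K comp d S0 ι = EF K e :=
    Linv_conv K comp d e hC3l hC3r hD3a hD3b hD3c hD3d hwf ι rfl
  have hS0e : S0 e = Finsupp.single e 1 := by
    rw [hS0, Linv_eq]; simp
  set U : C → (C →₀ K) := Linv K comp d e hwf S0 with hU
  have hUS : conv K comp d U S0 = EF K e :=
    Linv_conv K comp d e hC3l hC3r hD3a hD3b hD3c hD3d hwf S0 hS0e
  have hUι : U = ι := by
    calc U = conv K comp d U (EF K e) :=
          (conv_E_right K comp d e hC3r hD3a hD3b hD3c hD3d U).symm
      _ = conv K comp d U (conv K comp d S0 ι) := by rw [hSι]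
      _ = conv K comp d (conv K comp d U S0) ι :=
          (conv_assoc K comp d hC2 hD2 U S0 ι).symm
      _ = conv K comp d (EF K e) ι := by rw [hUS]
      _ = ι := conv_E_left K comp d e hC3l hD3a hD3b hD3c hD3d ι
  have hιS : conv K comp d ι S0 = EF K e := by rw [← hUι]; exact hUS
  refine ⟨Finsupp.lift (C →₀ K) K C S0, fun Γ => ?_⟩
  have hlift : ∀ a : C, (Finsupp.lift (C →₀ K) K C S0) (Finsupp.single a 1) = S0 a := by
    intro a
    rw [Finsupp.lift_apply, Finsupp.sum_single_index] <;> simp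
  constructor
  · have h1 := congrFun hSι Γ
    rw [conv] at h1
    calc ((d Γ).map fun p =>
          mulF K comp ((Finsupp.lift (C →₀ K) K C S0) (Finsupp.single p.1 1))
            (Finsupp.single p.2 1)).sum
        = ((d Γ).map fun p => mulF K comp (S0 p.1) (ι p.2)).sum :=
          congrArg _ (Multiset.map_congr rfl fun p _ => by rw [hlift])
      _ = EF K e Γ := h1
      _ = _ := by simp [EF]
  · have h1 := congrFun hιS Γ
    rw [conv] at h1
    calc ((d Γ).map fun p =>
          mulF K comp (Finsupp.single p.1 1)
            ((Finsupp.lift (C →₀ K) K C S0) (Finsupp.single p.2 1))).sum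
        = ((d Γ).map fun p => mulF K comp (ι p.1) (S0 p.2)).sum :=
          congrArg _ (Multiset.map_congr rfl fun p _ => by rw [hlift])
      _ = EF K e Γ := h1
      _ = _ := by simp [EF]
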